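/- Suppose x_1, …, x_n ∈ {i, j, k} ⊆ ℝ³ and L, R are two parenthesizations of the cross product x_1 × ⋯ × x_n such that every partial product occurring in the evaluation of L and of R lies in {±i, ±j, ±k} (in particular is nonzero). Then L = R. -/

import Mathlib

/-- A bracketed product: a full binary tree whose leaves carry values in `α`. -/
inductive LTree (α : Type*) : Type _
  | leaf (a : α) : LTree α
  | node (l r : LTree α) : LTree α

/-- Evaluate a bracketed product with respect to a binary operation `op`. -/
def LTree.evalWith {α : Type*} (op : α → α → α) : LTree α → α
  | .leaf a => a
  | .node l r => op (l.evalWith op) (r.evalWith op)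

/-- The ordered list of leaf values (the sequence of factors). -/
def LTree.leafList {α : Type*} : LTree α → List α
  | .leaf a => [a]
  | .node l r => l.leafList ++ r.leafList

/-- Sharpness: every partial product occurring in the evaluation lies in `S`. -/
def LTree.Sharp {α : Type*} (op : α → α → α) (S : Set α) : LTree α → Prop
  | .leaf a => a ∈ S
  | .node l r => l.Sharp op S ∧ r.Sharp op S ∧
      (LTree.node l r).evalWith op ∈ S

set_option maxHeartbeats 1000000

noncomputable def toQ (v : Fin 3 → ℝ) : Quaternion ℝ := ⟨0, v 0, v 1, v 2⟩

lemma toQ_inj {u v : Fin 3 → ℝ} (h : toQ u = toQ v) : u = v := by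
  rw [Quaternion.ext_iff] at h
  simp [toQ, Quaternion.ext_iff] at h
  funext x
  fin_cases x <;> simp [h.1, h.2.1, h.2.2]

lemma key (u v : Fin 3 → ℝ)
    (hu : u ∈ ({![1,0,0], -![1,0,0], ![0,1,0], -![0,1,0], ![0,0,1], -![0,0,1]} : Set (Fin 3 → ℝ)))
    (hv : v ∈ ({![1,0,0], -![1,0,0], ![0,1,0], -![0,1,0], ![0,0,1], -![0,0,1]} : Set (Fin 3 → ℝ)))
    (hw : crossProduct u v ∈ ({![1,0,0], -![1,0,0], ![0,1,0], -![0,1,0], ![0,0,1], -![0,0,1]} : Set (Fin 3 → ℝ))) :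
    toQ (crossProduct u v) = toQ u * toQ v := by
  simp only [Set.mem_insert_iff, Set.mem_singleton_iff] at hu hv
  rcases hu with rfl|rfl|rfl|rfl|rfl|rfl <;> rcases hv with rfl|rfl|rfl|rfl|rfl|rfl <;>
    first
    | (exfalso
       simp only [Set.mem_insert_iff, Set.mem_singleton_iff] at hw
       revert hw
       simp [crossProduct, Matrix.neg_cons, Matrix.neg_empty, funext_iff, Fin.forall_fin_succ]
       done)
    | (rw [Quaternion.ext_iff, Quaternion.re_mul, Quaternion.imI_mul, Quaternion.imJ_mul, Quaternion.imK_mul]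
       norm_num [toQ, crossProduct, Matrix.neg_cons, Matrix.neg_empty, Quaternion.ext_iff, Quaternion.re_mul, Quaternion.imI_mul,
        Quaternion.imJ_mul, Quaternion.imK_mul, Matrix.cons_val_two, Matrix.tail_cons, Matrix.head_cons])

lemma sharp_eval_mem {α : Type*} {op : α → α → α} {S : Set α} :
    ∀ {t : LTree α}, t.Sharp op S → t.evalWith op ∈ S
  | .leaf a, h => h
  | .node l r, h => h.2.2

lemma sharp_toQ_eval (cross : (Fin 3 → ℝ) → (Fin 3 → ℝ) → (Fin 3 → ℝ))
    (hcross : ∀ u v, cross u v = crossProduct u v) :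
    ∀ (t : LTree (Fin 3 → ℝ)),
      t.Sharp cross ({![1,0,0], -![1,0,0], ![0,1,0], -![0,1,0], ![0,0,1], -![0,0,1]} : Set (Fin 3 → ℝ)) →
      toQ (t.evalWith cross) = (t.leafList.map toQ).prod
  | .leaf a, _ => by simp [LTree.evalWith, LTree.leafList]
  | .node l r, h => by
      have hl := sharp_toQ_eval cross hcross l h.1
      have hr := sharp_toQ_eval cross hcross r h.2.1
      have hm := h.2.2
      simp only [LTree.evalWith, hcross] at hm ⊢
      rw [key _ _ (sharp_eval_mem h.1) (sharp_eval_mem h.2.1) hm, hl, hr,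
        LTree.leafList, List.map_append, List.prod_append]

/-- If `x₁, …, xₙ ∈ {i, j, k} ⊆ ℝ³` and `L, R` are two parenthesizations of the
cross product `x₁ × ⋯ × xₙ` such that every partial product in the evaluation of
`L` and of `R` lies in `{±i, ±j, ±k}`, then `L = R`. -/
theorem sharp_cross_bracketings_eq
    (i j k : Fin 3 → ℝ) (hi : i = ![1, 0, 0]) (hj : j = ![0, 1, 0])
    (hk : k = ![0, 0, 1])
    (cross : (Fin 3 → ℝ) → (Fin 3 → ℝ) → (Fin 3 → ℝ))
    (hcross : ∀ u v, cross u v = crossProduct u v)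
    (L R : LTree (Fin 3 → ℝ))
    (hleaves : L.leafList = R.leafList)
    (hx : ∀ x ∈ L.leafList, x ∈ ({i, j, k} : Set (Fin 3 → ℝ)))
    (hL : L.Sharp cross {i, -i, j, -j, k, -k})
    (hR : R.Sharp cross {i, -i, j, -j, k, -k}) :
    L.evalWith cross = R.evalWith cross := by
  subst hi hj hk
  apply toQ_inj
  rw [sharp_toQ_eval cross hcross L hL, sharp_toQ_eval cross hcross R hR, hleaves]
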